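/- arXiv:math/9910178 — 2 statements merged into one kernel-verified Lean document; each statement's English description precedes it below -/
import Mathlib

section
/- In the inductive step of extending an A-infinity action: suppose coderivations b_1,…,b_{N-1} of degree 1 on X = T(A[1]) ⊗ L satisfy Σ_{i+j=n+1} b_i b_j = 0 for all n ≤ N-1 (N ≥ 4). Then the map c = b_2 b_{N-1} + b_3 b_{N-2} + … + b_{N-1} b_2 vanishes on the subcomodule X_{N-1} (tensor length < N-1 part), takes X_N into L, and the induced graded map of degree 2 from X_N/X_{N-1} = A[1]^{⊗(N-1)} ⊗ L to L is a morphism of complexes, i.e. commutes with the differentials induced by b_1. -/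
open scoped TensorProduct

noncomputable section

/-- Transport along an equality of indices. -/
def cstM {k : Type} [CommRing k] {M : ℤ → Type} [∀ i, AddCommGroup (M i)]
    [∀ i, Module k (M i)] {i j : ℤ} (h : i = j) : M i →ₗ[k] M j := by
  subst h; exact LinearMap.id

variable (k A : Type) [CommRing k] [Ring A] [Algebra k A]

/-- The `n`-fold tensor power of `A` over `k`, i.e. the tensor-length `n` component
`A[1]^{⊗ n}` (of degree `-n`) of the tensor coalgebra `C = T(A[1])`. -/
abbrev TPow (n : ℕ) : Type := ⨂[k] (_ : Fin n), A

/-- The tuple obtained by multiplying the entries at positions `t`, `t+1`. -/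
def mergeV {A : Type} [Ring A] {n : ℕ} (x : Fin (n + 1) → A) (t : ℕ) (ht : t < n) :
    Fin n → A :=
  fun s => if (s : ℕ) < t then x ⟨s, by have := s.2; omega⟩
    else if (s : ℕ) = t then x ⟨t, by omega⟩ * x ⟨t + 1, by omega⟩
    else x ⟨(s : ℕ) + 1, by have := s.2; omega⟩

/-- Deconcatenation `A^{⊗(p+r)} → A^{⊗p} ⊗ A^{⊗r}`, one component of the
comultiplication of `C = T(A[1])`. -/
def splitC (p r : ℕ) : TPow k A (p + r) →ₗ[k] TPow k A p ⊗[k] TPow k A r :=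
  (PiTensorProduct.tmulEquiv k A).symm.toLinearMap ∘ₗ
    (PiTensorProduct.reindex k (fun _ : Fin (p + r) => A) finSumFinEquiv.symm).toLinearMap

variable (L : ℤ → Type) [∀ j, AddCommGroup (L j)] [∀ j, Module k (L j)]

/-- The `(n, j)` component `A[1]^{⊗ n} ⊗ L^j` (of degree `j - n`) of the cofree
comodule `X = C ⊗ L = T(A[1]) ⊗ L`. -/
abbrev XC (n : ℕ) (j : ℤ) : Type := TPow k A n ⊗[k] L j

/-- Transport along an equality of `L`-degrees. -/
def cstT {n : ℕ} {j j' : ℤ} (h : j = j') : XC k A L n j →ₗ[k] XC k A L n j' := by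
  subst h; exact LinearMap.id

/-- The `(p, r)`-component `X_{p+r} → C_p ⊗ X_r` of the comultiplication
`δ : X → C ⊗ X` of the cofree comodule `X = C ⊗ L`. -/
def splitX (p r : ℕ) (j : ℤ) :
    XC k A L (p + r) j →ₗ[k] TPow k A p ⊗[k] XC k A L r j :=
  (TensorProduct.assoc k (TPow k A p) (TPow k A r) (L j)).toLinearMap ∘ₗ
    LinearMap.rTensor (L j) (splitC k A p r)

/-- A coderivation of degree `e` of the cofree comodule `X = C ⊗ L`, described by its
matrix of components `cp n m j : C_n ⊗ L^j → C_m ⊗ L^{j + e + m - n}` (a graded map of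
degree `e` lowers tensor length, never raises it: `bounded`).  The field `law` is the
componentwise form, on pure tensors, of the coderivation identity
`δ ∘ b = (b_C ⊗ 1_X + 1_C ⊗ b) ∘ δ`, where `b_C` is the bar differential of `C`
(of degree `1`, so the `b_C ⊗ 1_X`-term contributes to the component `(p, r)` exactly
when `e = 1` and the tail has length `r + 1`) and where the Koszul sign rule produces
the sign `(-1)^{e·p}` in the `1_C ⊗ b`-term. -/
structure Coder (e : ℤ) where
  cp : ∀ (n m : ℕ) (j : ℤ), XC k A L n j →ₗ[k] XC k A L m (j + e + (m : ℤ) - (n : ℤ))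
  bounded : ∀ n m j, n < m → cp n m j = 0
  law : ∀ (p s r : ℕ) (j : ℤ) (u : Fin p → A) (v : Fin s → A) (l : L j),
    splitX k A L p r _
        (cp (p + s) (p + r) j (PiTensorProduct.tprod k (Fin.append u v) ⊗ₜ[k] l)) =
      ((if h : e = 1 ∧ s = r + 1 then
        ∑ t ∈ Finset.range p, (if ht : t < p then
          ((-1 : ℤ) ^ t) •
            (LinearMap.lTensor (TPow k A p) (cstT k A L (by omega))
              (PiTensorProduct.tprod k
                  (mergeV (Fin.snoc u (v ⟨0, by omega⟩)) t ht) ⊗ₜ[k]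
                (PiTensorProduct.tprod k
                    (fun q : Fin r => v ⟨(q : ℕ) + 1, by have := q.2; omega⟩) ⊗ₜ[k] l)))
        else 0 : TPow k A p ⊗[k] XC k A L r (j + e + ((p + r : ℕ) : ℤ) - ((p + s : ℕ) : ℤ)))
      else 0)
      + ((-1 : ℤ) ^ ((e * (p : ℤ)).natAbs)) •
          (PiTensorProduct.tprod k u ⊗ₜ[k]
            cstT k A L (by push_cast; omega)
              (cp s r j (PiTensorProduct.tprod k v ⊗ₜ[k] l)))
        : TPow k A p ⊗[k] XC k A L r (j + e + ((p + r : ℕ) : ℤ) - ((p + s : ℕ) : ℤ)))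

/-- The contraction `C_0 ⊗ L^j ≅ k ⊗ L^j ≅ L^j`. -/
def contract0 (j : ℤ) : XC k A L 0 j →ₗ[k] L j :=
  (TensorProduct.lid k (L j)).toLinearMap ∘ₗ
    LinearMap.rTensor (L j) (PiTensorProduct.isEmptyEquiv (Fin 0)).toLinearMap

/-- The components of `ε ∘ b : X → L`, for `ε : X → L` the canonical projection. -/
def epsC {e : ℤ} (b : Coder k A L e) (n : ℕ) (j : ℤ) :
    XC k A L n j →ₗ[k] L (j + e - (n : ℤ)) :=
  cstM (k := k) (by ring) ∘ₗ (contract0 k A L _ ∘ₗ b.cp n 0 j)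

/-- The components of the composite `b ∘ b'` of two degree `1` coderivations. -/
def compC (b b' : Coder k A L 1) (n p : ℕ) (j : ℤ) :
    XC k A L n j →ₗ[k] XC k A L p (j + 2 + (p : ℤ) - (n : ℤ)) :=
  ∑ m ∈ Finset.range (n + 1),
    (cstT k A L (by ring) ∘ₗ (b.cp m p _ ∘ₗ b'.cp n m j))
section Infra

variable {k A : Type} [CommRing k] [Ring A] [Algebra k A]
variable {L : ℤ → Type} [∀ j, AddCommGroup (L j)] [∀ j, Module k (L j)]

lemma cstT_rfl {n : ℕ} {j : ℤ} (h : j = j) :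
    cstT k A L (n := n) h = LinearMap.id := rfl

lemma cstT_cstT {n : ℕ} {j1 j2 j3 : ℤ} (h : j1 = j2) (h' : j2 = j3) :
    (cstT k A L (n := n) h') ∘ₗ cstT k A L h = cstT k A L (h.trans h') := by
  subst h h'; rfl

lemma cstT_comp_eq_zero_iff {n : ℕ} {j j' : ℤ} (h : j = j') {M : Type}
    [AddCommGroup M] [Module k M] (f : M →ₗ[k] XC k A L n j) :
    cstT k A L h ∘ₗ f = 0 ↔ f = 0 := by
  subst h; simp [cstT_rfl]

lemma XC_ext {n : ℕ} {j : ℤ} {M : Type} [AddCommGroup M] [Module k M]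
    {f g : XC k A L n j →ₗ[k] M}
    (h : ∀ (w : Fin n → A) (l : L j),
      f (PiTensorProduct.tprod k w ⊗ₜ[k] l) = g (PiTensorProduct.tprod k w ⊗ₜ[k] l)) :
    f = g := by
  apply TensorProduct.ext'
  intro x y
  induction x using PiTensorProduct.induction_on with
  | smul_tprod c w =>
      have hc : (c • (PiTensorProduct.tprod k) w : TPow k A n) ⊗ₜ[k] y
          = c • (((PiTensorProduct.tprod k) w : TPow k A n) ⊗ₜ[k] y) :=
        (TensorProduct.smul_tmul' c _ _).symm
      rw [hc, map_smul, map_smul, h]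
  | add a b ha hb =>
      rw [TensorProduct.add_tmul, map_add, map_add, ha, hb]

/-- `splitX` as an equivalence. -/
def splitXE (p r : ℕ) (j : ℤ) :
    XC k A L (p + r) j ≃ₗ[k] TPow k A p ⊗[k] XC k A L r j :=
  (TensorProduct.congr
      ((PiTensorProduct.reindex k (fun _ : Fin (p + r) => A) finSumFinEquiv.symm).trans
        (PiTensorProduct.tmulEquiv k A).symm)
      (LinearEquiv.refl k (L j))).trans
    (TensorProduct.assoc k (TPow k A p) (TPow k A r) (L j))

lemma splitX_eq (p r : ℕ) (j : ℤ) :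
    splitX k A L p r j = (splitXE (p := p) (r := r) (j := j)).toLinearMap := by
  ext x
  rfl

lemma splitX_inj (p r : ℕ) (j : ℤ) {x y : XC k A L (p + r) j}
    (h : splitX k A L p r j x = splitX k A L p r j y) : x = y := by
  rw [splitX_eq] at h
  exact (splitXE (p := p) (r := r) (j := j)).injective h

/-- `contract0` as an equivalence. -/
def contract0E (j : ℤ) : XC k A L 0 j ≃ₗ[k] L j :=
  (TensorProduct.congr (PiTensorProduct.isEmptyEquiv (Fin 0)) (LinearEquiv.refl k (L j))).trans
    (TensorProduct.lid k (L j))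

lemma contract0_eq (j : ℤ) :
    contract0 k A L j = (contract0E (j := j) (k := k) (A := A) (L := L)).toLinearMap := by
  ext x
  rfl

/-- If `ε ∘ b` vanishes in source-length `n`, so does the component `cp n 0`. -/
lemma cp_zero_of_eps {e : ℤ} {b : Coder k A L e} {n : ℕ} {j : ℤ}
    (h : epsC k A L b n j = 0) : b.cp n 0 j = 0 := by
  have h2 : ∀ x, contract0 k A L _ (b.cp n 0 j x) = 0 := by
    intro x
    have := congrFun (congrArg DFunLike.coe h) x
    simp only [epsC, LinearMap.comp_apply, LinearMap.zero_apply] at this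
    have h3 : ∀ (j' j'' : ℤ) (hq : j' = j'') (y : L j'), cstM (k := k) (M := L) hq y = 0 → y = 0 := by
      intro j' j'' hq y hy; subst hq; exact hy
    exact h3 _ _ _ _ this
  apply LinearMap.ext
  intro x
  rw [contract0_eq] at h2
  exact (contract0E _).injective (by simpa using h2 x)

end Infra
section Key

variable {k A : Type} [CommRing k] [Ring A] [Algebra k A]
variable {L : ℤ → Type} [∀ j, AddCommGroup (L j)] [∀ j, Module k (L j)]

/-- If `ε ∘ b` is concentrated in source-length `d`, then the only possibly nonzero
components of `b` are `cp (m+1) m` (bar part) and `cp (m+d) m` (the `ε`-part). -/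
lemma cp_vanish {b : Coder k A L 1} {d : ℕ}
    (hb : ∀ (n : ℕ) (j : ℤ), n ≠ d → b.cp n 0 j = 0) :
    ∀ (n m : ℕ) (j : ℤ), m + 1 ≠ n → m + d ≠ n → b.cp n m j = 0 := by
  intro n m j h1 h2
  rcases lt_or_ge n m with h | h
  · exact b.bounded n m j h
  obtain ⟨s, rfl⟩ : ∃ s, n = m + s := ⟨n - m, by omega⟩
  refine XC_ext (g := 0) fun w l => ?_
  set u : Fin m → A := fun q => w (Fin.castAdd s q) with hu
  set v : Fin s → A := fun q => w (Fin.natAdd m q) with hv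
  have hw : Fin.append u v = w := Fin.append_castAdd_natAdd
  have hlaw := b.law m s 0 j u v l
  rw [hw] at hlaw
  rw [dif_neg (by rintro ⟨-, hs⟩; omega), hb s j (by omega)] at hlaw
  simp only [LinearMap.zero_apply, TensorProduct.tmul_zero, map_zero, smul_zero,
    zero_add, add_zero] at hlaw
  simp only [LinearMap.zero_apply]
  exact splitX_inj m 0 _ (by rw [map_zero]; exact hlaw)

/-- The bar-part components `cp (m+1) m` agree for all extended coderivations whose
`cp 1 0` component vanishes. -/
lemma cp_bar_eq {b b' : Coder k A L 1}
    (hb : ∀ j, b.cp 1 0 j = 0) (hb' : ∀ j, b'.cp 1 0 j = 0) (m : ℕ) (j : ℤ) :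
    b.cp (m + 1) m j = b'.cp (m + 1) m j := by
  refine XC_ext fun w l => ?_
  set u : Fin m → A := fun q => w (Fin.castAdd 1 q) with hu
  set v : Fin 1 → A := fun q => w (Fin.natAdd m q) with hv
  have hw : Fin.append u v = w := Fin.append_castAdd_natAdd
  have h1 := b.law m 1 0 j u v l
  have h2 := b'.law m 1 0 j u v l
  rw [hw, hb j] at h1
  rw [hw, hb' j] at h2
  exact splitX_inj m 0 _ (h1.trans h2.symm)

end Key
section Prune

variable {k A : Type} [CommRing k] [Ring A] [Algebra k A]
variable {L : ℤ → Type} [∀ j, AddCommGroup (L j)] [∀ j, Module k (L j)]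

/-- A single summand of `compC`. -/
def term (b b' : Coder k A L 1) (n p : ℕ) (j : ℤ) (m : ℕ) :
    XC k A L n j →ₗ[k] XC k A L p (j + 2 + (p : ℤ) - (n : ℤ)) :=
  cstT k A L (by ring) ∘ₗ (b.cp m p _ ∘ₗ b'.cp n m j)

lemma compC_eq_sum_term (b b' : Coder k A L 1) (n p : ℕ) (j : ℤ) :
    compC k A L b b' n p j = ∑ m ∈ Finset.range (n + 1), term b b' n p j m := rfl

lemma term_eq_zero_left {b b' : Coder k A L 1} {n p : ℕ} {j : ℤ} {m : ℕ}
    (h : b.cp m p (j + 1 + (m : ℤ) - (n : ℤ)) = 0) : term b b' n p j m = 0 := by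
  unfold term; rw [h]; simp

lemma term_eq_zero_right {b b' : Coder k A L 1} {n p : ℕ} {j : ℤ} {m : ℕ}
    (h : b'.cp n m j = 0) : term b b' n p j m = 0 := by
  unfold term; rw [h]; simp

lemma compC_eq_zero' {b b' : Coder k A L 1} {n p : ℕ} {j : ℤ}
    (hz : ∀ m, m ≤ n → term b b' n p j m = 0) :
    compC k A L b b' n p j = 0 := by
  rw [compC_eq_sum_term]
  exact Finset.sum_eq_zero fun m hm => hz m (by simpa using Nat.lt_succ_iff.mp (Finset.mem_range.mp hm))

lemma compC_eq_single {b b' : Coder k A L 1} {n p : ℕ} {j : ℤ} (m0 : ℕ) (hm0 : m0 ≤ n)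
    (hz : ∀ m, m ≤ n → m ≠ m0 → term b b' n p j m = 0) :
    compC k A L b b' n p j = term b b' n p j m0 := by
  rw [compC_eq_sum_term]
  rw [Finset.sum_eq_single m0 (fun m hm hne => hz m (Nat.lt_succ_iff.mp (Finset.mem_range.mp hm)) hne)
    (fun h => absurd (Finset.mem_range.mpr (Nat.lt_succ_iff.mpr hm0)) h)]

lemma compC_eq_pair {b b' : Coder k A L 1} {n p : ℕ} {j : ℤ} (m0 m1 : ℕ)
    (hne : m0 ≠ m1) (hm0 : m0 ≤ n) (hm1 : m1 ≤ n)
    (hz : ∀ m, m ≤ n → m ≠ m0 → m ≠ m1 → term b b' n p j m = 0) :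
    compC k A L b b' n p j = term b b' n p j m0 + term b b' n p j m1 := by
  rw [compC_eq_sum_term]
  rw [← Finset.sum_subset (s₁ := ({m0, m1} : Finset ℕ))
    (by intro x hx; rcases Finset.mem_insert.mp hx with h | h
        · exact Finset.mem_range.mpr (by omega)
        · rw [Finset.mem_singleton] at h; exact Finset.mem_range.mpr (by omega))
    (fun x hx hnx => hz x (Nat.lt_succ_iff.mp (Finset.mem_range.mp hx))
      (fun h => hnx (by simp [h])) (fun h => hnx (by simp [h])))]
  exact Finset.sum_pair hne

end Prune
section Main1

variable {k A : Type} [CommRing k] [Ring A] [Algebra k A]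
variable {L : ℤ → Type} [∀ j, AddCommGroup (L j)] [∀ j, Module k (L j)]

lemma term_rw_left {b c b' : Coder k A L 1} {n p : ℕ} {j : ℤ} {m : ℕ}
    (h : b.cp m p (j + 1 + (m : ℤ) - (n : ℤ)) = c.cp m p (j + 1 + (m : ℤ) - (n : ℤ))) :
    term b b' n p j m = term c b' n p j m := by
  unfold term; rw [h]

lemma term_rw_right {b b' c' : Coder k A L 1} {n p : ℕ} {j : ℤ} {m : ℕ}
    (h : b'.cp n m j = c'.cp n m j) :
    term b b' n p j m = term b c' n p j m := by
  unfold term; rw [h]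

lemma mainVanish (N : ℕ) (hN : 4 ≤ N) (bs : ℕ → Coder k A L 1)
    (hconc : ∀ i : ℕ, 1 ≤ i → i ≤ N - 1 → ∀ (n : ℕ) (j : ℤ), n ≠ i - 1 →
      epsC k A L (bs i) n j = 0)
    (hrel : ∀ n' : ℕ, 1 ≤ n' → n' ≤ N - 1 → ∀ (src tgt : ℕ) (j : ℤ),
      (∑ i ∈ Finset.Icc 1 n',
        compC k A L (bs i) (bs (n' + 1 - i)) src tgt j) = 0)
    (src tgt : ℕ) (j : ℤ) (hst : src < tgt + (N - 1)) :
    (∑ i ∈ Finset.Icc 2 (N - 1),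
      compC k A L (bs i) (bs (N + 1 - i)) src tgt j) = 0 := by
  have V : ∀ i, 1 ≤ i → i ≤ N-1 → ∀ (n m : ℕ) (j' : ℤ), m+1 ≠ n → m+(i-1) ≠ n →
      (bs i).cp n m j' = 0 :=
    fun i h1 h2 => cp_vanish (fun n j' hn => cp_zero_of_eps (hconc i h1 h2 n j' hn))
  have Ebar : ∀ i, 1 ≤ i → i ≤ N-1 → i ≠ 2 → ∀ (m : ℕ) (j' : ℤ),
      (bs i).cp (m+1) m j' = (bs 1).cp (m+1) m j' :=
    fun i h1 h2 hne m j' => cp_bar_eq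
      (fun j'' => cp_zero_of_eps (hconc i h1 h2 1 j'' (by omega)))
      (fun j'' => cp_zero_of_eps (hconc 1 (by omega) (by omega) 1 j'' (by omega))) m j'
  rcases lt_or_ge src (tgt + 2) with hA | hA
  · -- drop ≤ 1 : every summand vanishes
    refine Finset.sum_eq_zero fun i hi => ?_
    rw [Finset.mem_Icc] at hi
    rw [compC_eq_sum_term]
    refine Finset.sum_eq_zero fun m hm => ?_
    rw [Finset.mem_range] at hm
    by_cases h1 : tgt + 1 = m ∨ tgt + (i-1) = m
    · exact term_eq_zero_right (V (N+1-i) (by omega) (by omega) src m j (by omega) (by omega))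
    · push_neg at h1
      exact term_eq_zero_left (V i (by omega) (by omega) m tgt _ h1.1 h1.2)
  rcases lt_or_ge src (tgt + 3) with hB | hB
  · -- drop = 2
    have hsrc : src = tgt + 2 := by omega
    subst hsrc
    -- the (bs 1, bs 1) term vanishes
    have Z0 : term (bs 1) (bs 1) (tgt+2) tgt j (tgt+1) = 0 := by
      have hr1 := hrel 1 le_rfl (by omega) (tgt+2) tgt j
      rw [Finset.Icc_self, Finset.sum_singleton] at hr1
      have hc : compC k A L (bs 1) (bs 1) (tgt+2) tgt j
          = term (bs 1) (bs 1) (tgt+2) tgt j (tgt+1) := by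
        refine compC_eq_single (tgt+1) (by omega) fun m hm hne => ?_
        by_cases h1 : m + 1 = tgt + 2 ∨ m + 0 = tgt + 2
        · exact term_eq_zero_left (V 1 (by omega) (by omega) m tgt _ (by omega) (by omega))
        · exact term_eq_zero_right (V 1 (by omega) (by omega) (tgt+2) m j (by omega) (by omega))
      rw [← hc]
      exact hr1
    have PQ : term (bs 1) (bs 2) (tgt+2) tgt j (tgt+1)
        + term (bs 2) (bs 1) (tgt+2) tgt j (tgt+1) = 0 := by
      have hr2 := hrel 2 (by omega) (by omega) (tgt+2) tgt j
      rw [show Finset.Icc 1 2 = ({1, 2} : Finset ℕ) by decide, Finset.sum_pair (by omega)] at hr2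
      have hc1 : compC k A L (bs 1) (bs 2) (tgt+2) tgt j
          = term (bs 1) (bs 2) (tgt+2) tgt j (tgt+1) := by
        refine compC_eq_single (tgt+1) (by omega) fun m hm hne => ?_
        by_cases h1 : m + 1 = tgt + 2
        · exact term_eq_zero_left (V 1 (by omega) (by omega) m tgt _ (by omega) (by omega))
        · exact term_eq_zero_right (V 2 (by omega) (by omega) (tgt+2) m j (by omega) (by omega))
      have hc2 : compC k A L (bs 2) (bs 1) (tgt+2) tgt j
          = term (bs 2) (bs 1) (tgt+2) tgt j (tgt+1) := by
        refine compC_eq_single (tgt+1) (by omega) fun m hm hne => ?_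
        by_cases h1 : m + 1 = tgt + 2 ∨ m + 0 = tgt + 2
        · exact term_eq_zero_left (V 2 (by omega) (by omega) m tgt _ (by omega) (by omega))
        · exact term_eq_zero_right (V 1 (by omega) (by omega) (tgt+2) m j (by omega) (by omega))
      rw [hc1, hc2] at hr2
      exact hr2
    have hterm : ∀ i ∈ Finset.Icc 2 (N-1),
        compC k A L (bs i) (bs (N+1-i)) (tgt+2) tgt j
          = term (bs i) (bs (N+1-i)) (tgt+2) tgt j (tgt+1) := by
      intro i hi
      rw [Finset.mem_Icc] at hi
      refine compC_eq_single (tgt+1) (by omega) fun m hm hne => ?_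
      by_cases h1 : m + 1 = tgt + 2 ∨ m + (N+1-i-1) = tgt + 2
      · exact term_eq_zero_left (V i (by omega) (by omega) m tgt _ (by omega) (by omega))
      · exact term_eq_zero_right (V (N+1-i) (by omega) (by omega) (tgt+2) m j (by omega) (by omega))
    rw [Finset.sum_congr rfl hterm]
    rw [← Finset.sum_subset (s₁ := ({2, N-1} : Finset ℕ))
      (by intro x hx; rcases Finset.mem_insert.mp hx with h | h
          · rw [h]; exact Finset.mem_Icc.mpr (by omega)
          · rw [Finset.mem_singleton] at h; rw [h]; exact Finset.mem_Icc.mpr (by omega))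
      ?_]
    · rw [Finset.sum_pair (by omega : (2:ℕ) ≠ N-1)]
      have e1 : term (bs 2) (bs (N+1-2)) (tgt+2) tgt j (tgt+1)
          = term (bs 2) (bs 1) (tgt+2) tgt j (tgt+1) :=
        term_rw_right (Ebar (N+1-2) (by omega) (by omega) (by omega) (tgt+1) j)
      have e2 : term (bs (N-1)) (bs (N+1-(N-1))) (tgt+2) tgt j (tgt+1)
          = term (bs 1) (bs 2) (tgt+2) tgt j (tgt+1) := by
        rw [show N+1-(N-1) = 2 by omega]
        exact term_rw_left (Ebar (N-1) (by omega) (by omega) (by omega) tgt _)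
      rw [e1, e2]
      rw [add_comm (term (bs 2) (bs 1) (tgt+2) tgt j (tgt+1)) (term (bs 1) (bs 2) (tgt+2) tgt j (tgt+1))]
      exact PQ
    · intro i hi hni
      rw [Finset.mem_Icc] at hi
      simp only [Finset.mem_insert, Finset.mem_singleton] at hni
      push_neg at hni
      have e3 : term (bs i) (bs (N+1-i)) (tgt+2) tgt j (tgt+1)
          = term (bs 1) (bs 1) (tgt+2) tgt j (tgt+1) := by
        refine (term_rw_left (Ebar i (by omega) (by omega) (by omega) tgt _)).trans
          (term_rw_right (Ebar (N+1-i) (by omega) (by omega) (by omega) (tgt+1) j))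
      rw [e3]; exact Z0
  · -- drop ≥ 3 (and ≤ N-2 by hst)
    obtain ⟨e, rfl⟩ : ∃ e, src = tgt + e + 3 := ⟨src - tgt - 3, by omega⟩
    have hd : e + 3 ≤ N - 2 := by omega
    -- the relation instance n' = e+3
    have T12 : term (bs (e+3)) (bs 1) (tgt+e+3) tgt j (tgt+e+2)
        + term (bs 1) (bs (e+3)) (tgt+e+3) tgt j (tgt+1) = 0 := by
      have hr := hrel (e+3) (by omega) (by omega) (tgt+e+3) tgt j
      rw [← Finset.sum_subset (s₁ := ({1, e+3} : Finset ℕ))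
        (by intro x hx; rcases Finset.mem_insert.mp hx with h | h
            · rw [h]; exact Finset.mem_Icc.mpr (by omega)
            · rw [Finset.mem_singleton] at h; rw [h]; exact Finset.mem_Icc.mpr (by omega))
        ?_] at hr
      · rw [Finset.sum_pair (by omega : (1:ℕ) ≠ e+3)] at hr
        rw [show e+3+1-1 = e+3 by omega, show e+3+1-(e+3) = 1 by omega] at hr
        have p1 : compC k A L (bs 1) (bs (e+3)) (tgt+e+3) tgt j
            = term (bs 1) (bs (e+3)) (tgt+e+3) tgt j (tgt+1) := by
          refine compC_eq_single (tgt+1) (by omega) fun m hm hne => ?_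
          by_cases h1 : m + 1 = tgt+e+3 ∨ m + (e+2) = tgt+e+3
          · exact term_eq_zero_left (V 1 (by omega) (by omega) m tgt _ (by omega) (by omega))
          · exact term_eq_zero_right (V (e+3) (by omega) (by omega) (tgt+e+3) m j (by omega) (by omega))
        have p2 : compC k A L (bs (e+3)) (bs 1) (tgt+e+3) tgt j
            = term (bs (e+3)) (bs 1) (tgt+e+3) tgt j (tgt+e+2) := by
          refine compC_eq_single (tgt+e+2) (by omega) fun m hm hne => ?_
          by_cases h1 : m + 1 = tgt+e+3 ∨ m + 0 = tgt+e+3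
          · exact term_eq_zero_left (V (e+3) (by omega) (by omega) m tgt _ (by omega) (by omega))
          · exact term_eq_zero_right (V 1 (by omega) (by omega) (tgt+e+3) m j (by omega) (by omega))
        rw [p1, p2] at hr
        rw [add_comm (term (bs (e+3)) (bs 1) (tgt+e+3) tgt j (tgt+e+2)) (term (bs 1) (bs (e+3)) (tgt+e+3) tgt j (tgt+1))]
        exact hr
      · intro a ha hna
        rw [Finset.mem_Icc] at ha
        simp only [Finset.mem_insert, Finset.mem_singleton] at hna
        push_neg at hna
        refine compC_eq_zero' fun m hm => ?_
        by_cases h1 : tgt + 1 = m ∨ tgt + (a-1) = m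
        · exact term_eq_zero_right (V (e+3+1-a) (by omega) (by omega) (tgt+e+3) m j (by omega) (by omega))
        · push_neg at h1
          exact term_eq_zero_left (V a (by omega) (by omega) m tgt _ h1.1 h1.2)
    -- prune the goal sum
    have hzero : ∀ i ∈ Finset.Icc 2 (N-1), i ≠ e+3 → i ≠ N+1-(e+3) →
        compC k A L (bs i) (bs (N+1-i)) (tgt+e+3) tgt j = 0 := by
      intro i hi hni1 hni2
      rw [Finset.mem_Icc] at hi
      refine compC_eq_zero' fun m hm => ?_
      by_cases h1 : tgt + 1 = m ∨ tgt + (i-1) = m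
      · exact term_eq_zero_right (V (N+1-i) (by omega) (by omega) (tgt+e+3) m j (by omega) (by omega))
      · push_neg at h1
        exact term_eq_zero_left (V i (by omega) (by omega) m tgt _ h1.1 h1.2)
    by_cases hC : e+3 = N+1-(e+3)
    · -- middle case: a single index contributes with two m's
      rw [← Finset.sum_subset (s₁ := ({e+3} : Finset ℕ))
        (by intro x hx; rw [Finset.mem_singleton] at hx; rw [hx]; exact Finset.mem_Icc.mpr (by omega))
        (fun i hi hni => hzero i hi (by simpa using hni) (by rw [← hC]; simpa using hni))]
      rw [Finset.sum_singleton]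
      rw [show N+1-(e+3) = e+3 from hC.symm]
      have pp : compC k A L (bs (e+3)) (bs (e+3)) (tgt+e+3) tgt j
          = term (bs (e+3)) (bs (e+3)) (tgt+e+3) tgt j (tgt+e+2)
            + term (bs (e+3)) (bs (e+3)) (tgt+e+3) tgt j (tgt+1) := by
        refine compC_eq_pair (tgt+e+2) (tgt+1) (by omega) (by omega) (by omega)
          fun m hm h1 h2 => ?_
        exact term_eq_zero_right (V (e+3) (by omega) (by omega) (tgt+e+3) m j (by omega) (by omega))
      rw [pp]
      rw [term_rw_right (b := bs (e+3)) (Ebar (e+3) (by omega) (by omega) (by omega) (tgt+e+2) j),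
          term_rw_left (b' := bs (e+3)) (Ebar (e+3) (by omega) (by omega) (by omega) tgt _)]
      exact T12
    · rw [← Finset.sum_subset (s₁ := ({e+3, N+1-(e+3)} : Finset ℕ))
        (by intro x hx; rcases Finset.mem_insert.mp hx with h | h
            · rw [h]; exact Finset.mem_Icc.mpr (by omega)
            · rw [Finset.mem_singleton] at h; rw [h]; exact Finset.mem_Icc.mpr (by omega))
        (by intro i hi hni; simp only [Finset.mem_insert, Finset.mem_singleton] at hni; push_neg at hni
            exact hzero i hi hni.1 hni.2)]
      rw [Finset.sum_pair hC]
      have p1 : compC k A L (bs (e+3)) (bs (N+1-(e+3))) (tgt+e+3) tgt j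
          = term (bs (e+3)) (bs (N+1-(e+3))) (tgt+e+3) tgt j (tgt+e+2) := by
        refine compC_eq_single (tgt+e+2) (by omega) fun m hm hne => ?_
        by_cases h1 : m + 1 = tgt+e+3 ∨ m + (N+1-(e+3)-1) = tgt+e+3
        · exact term_eq_zero_left (V (e+3) (by omega) (by omega) m tgt _ (by omega) (by omega))
        · push_neg at h1
          exact term_eq_zero_right (V (N+1-(e+3)) (by omega) (by omega) (tgt+e+3) m j (by omega) h1.2)
      have p2 : compC k A L (bs (N+1-(e+3))) (bs (N+1-(N+1-(e+3)))) (tgt+e+3) tgt j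
          = term (bs (N+1-(e+3))) (bs (e+3)) (tgt+e+3) tgt j (tgt+1) := by
        rw [show N+1-(N+1-(e+3)) = e+3 by omega]
        refine compC_eq_single (tgt+1) (by omega) fun m hm hne => ?_
        by_cases h1 : m + 1 = tgt+e+3 ∨ m + (e+2) = tgt+e+3
        · exact term_eq_zero_left (V (N+1-(e+3)) (by omega) (by omega) m tgt _ (by omega) (by omega))
        · push_neg at h1
          exact term_eq_zero_right (V (e+3) (by omega) (by omega) (tgt+e+3) m j h1.1 (by omega))
      rw [p1, p2]
      rw [term_rw_right (b := bs (e+3)) (Ebar (N+1-(e+3)) (by omega) (by omega) (by omega) (tgt+e+2) j),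
          term_rw_left (b' := bs (e+3)) (Ebar (N+1-(e+3)) (by omega) (by omega) (by omega) tgt _)]
      exact T12

end Main1
section Bridge

variable {k A : Type} [CommRing k] [Ring A] [Algebra k A]
variable {L : ℤ → Type} [∀ j, AddCommGroup (L j)] [∀ j, Module k (L j)]

lemma compL_sum {ι : Type} (s : Finset ι) {M1 M2 M3 : Type}
    [AddCommGroup M1] [AddCommGroup M2] [AddCommGroup M3]
    [Module k M1] [Module k M2] [Module k M3]
    (f : M2 →ₗ[k] M3) (g : ι → (M1 →ₗ[k] M2)) :
    f ∘ₗ (∑ i ∈ s, g i) = ∑ i ∈ s, (f ∘ₗ g i) := by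
  ext x
  simp [LinearMap.sum_apply, map_sum]

lemma sum_compL {ι : Type} (s : Finset ι) {M1 M2 M3 : Type}
    [AddCommGroup M1] [AddCommGroup M2] [AddCommGroup M3]
    [Module k M1] [Module k M2] [Module k M3]
    (f : M1 →ₗ[k] M2) (g : ι → (M2 →ₗ[k] M3)) :
    (∑ i ∈ s, g i) ∘ₗ f = ∑ i ∈ s, (g i ∘ₗ f) := by
  ext x
  simp [LinearMap.sum_apply]

lemma cp_cstT_apply {e : ℤ} (b : Coder k A L e) (n m : ℕ) {j1 j2 : ℤ} (h : j1 = j2)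
    (y : XC k A L n j1) :
    b.cp n m j2 (cstT k A L h y)
      = cstT k A L (show j1 + e + (m:ℤ) - (n:ℤ) = j2 + e + (m:ℤ) - (n:ℤ) by rw [h])
          (b.cp n m j1 y) := by
  subst h; rfl

lemma cstT_cstT_apply {n : ℕ} {j1 j2 j3 : ℤ} (h : j1 = j2) (h' : j2 = j3)
    (y : XC k A L n j1) :
    cstT k A L h' (cstT k A L h y) = cstT k A L (h.trans h') y := by
  subst h h'; rfl

/-- Canonical triple composite `b1 ∘ b2 ∘ b3` landing in tensor length `0`. -/
def term3 (b1 b2 b3 : Coder k A L 1) (n : ℕ) (j : ℤ) (m2 m1 : ℕ) :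
    XC k A L n j →ₗ[k] XC k A L 0 (j + 3 - (n : ℤ)) :=
  cstT k A L (by push_cast; ring) ∘ₗ
    (b1.cp m1 0 (j + 2 + (m1:ℤ) - (n:ℤ)) ∘ₗ term b2 b3 n m1 j m2)

lemma cp_comp_term (b1 b2 b3 : Coder k A L 1) (n m2 m1 : ℕ) (j : ℤ)
    (pf : j + 2 + (m1:ℤ) - (n:ℤ) + 1 + ((0:ℕ):ℤ) - (m1:ℤ) = j + 3 - (n:ℤ)) :
    cstT k A L pf ∘ₗ
        (b1.cp m1 0 (j + 2 + (m1:ℤ) - (n:ℤ)) ∘ₗ term b2 b3 n m1 j m2)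
      = term3 b1 b2 b3 n j m2 m1 := rfl

lemma term_comp_cp (b1 b2 b3 : Coder k A L 1) (n n2 m : ℕ) (j : ℤ)
    (pf : j + 1 + (n2:ℤ) - (n:ℤ) + 2 + ((0:ℕ):ℤ) - (n2:ℤ) = j + 3 - (n:ℤ)) :
    cstT k A L pf ∘ₗ
        (term b1 b2 n2 0 (j + 1 + (n2:ℤ) - (n:ℤ)) m ∘ₗ b3.cp n n2 j)
      = term3 b1 b2 b3 n j n2 m := by
  unfold term3 term
  apply LinearMap.ext
  intro x
  simp only [LinearMap.comp_apply]
  rw [cp_cstT_apply, cstT_cstT_apply, cstT_cstT_apply]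

end Bridge
section Part3

variable {k A : Type} [CommRing k] [Ring A] [Algebra k A]
variable {L : ℤ → Type} [∀ j, AddCommGroup (L j)] [∀ j, Module k (L j)]

lemma part3 (M : ℕ) (bs : ℕ → Coder k A L 1)
    (hconc : ∀ i : ℕ, 1 ≤ i → i ≤ M + 3 → ∀ (n : ℕ) (j : ℤ), n ≠ i - 1 →
      epsC k A L (bs i) n j = 0)
    (hrel : ∀ n' : ℕ, 1 ≤ n' → n' ≤ M + 3 → ∀ (src tgt : ℕ) (j : ℤ),
      (∑ i ∈ Finset.Icc 1 n',
        compC k A L (bs i) (bs (n' + 1 - i)) src tgt j) = 0)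
    (j : ℤ) :
    (cstT k A L (by push_cast; ring) ∘ₗ
        ((bs 1).cp 0 0 _ ∘ₗ
          (∑ i ∈ Finset.Icc 2 (M+3),
            compC k A L (bs i) (bs (M+5-i)) (M+3) 0 j))
      : XC k A L (M+3) j →ₗ[k] XC k A L 0 (j + 3 - ((M+3 : ℕ) : ℤ)))
    = cstT k A L (by push_cast; ring) ∘ₗ
        ((∑ i ∈ Finset.Icc 2 (M+3),
            compC k A L (bs i) (bs (M+5-i)) (M+3) 0 _) ∘ₗ
          (bs 1).cp (M+3) (M+3) j) := by
  have V : ∀ i, 1 ≤ i → i ≤ M+3 → ∀ (n m : ℕ) (j' : ℤ), m+1 ≠ n → m+(i-1) ≠ n →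
      (bs i).cp n m j' = 0 :=
    fun i h1 h2 => cp_vanish (fun n j' hn => cp_zero_of_eps (hconc i h1 h2 n j' hn))
  have Ebar : ∀ i, 1 ≤ i → i ≤ M+3 → i ≠ 2 → ∀ (m : ℕ) (j' : ℤ),
      (bs i).cp (m+1) m j' = (bs 1).cp (m+1) m j' :=
    fun i h1 h2 hne m j' => cp_bar_eq
      (fun j'' => cp_zero_of_eps (hconc i h1 h2 1 j'' (by omega)))
      (fun j'' => cp_zero_of_eps (hconc 1 (by omega) (by omega) 1 j'' (by omega))) m j'
  have B1 : ∀ a, 1 ≤ a → a ≤ M+3 → a ≠ 2 → ∀ j'' , (bs a).cp 1 0 j'' = 0 :=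
    fun a h1 h2 hne j'' => cp_zero_of_eps (hconc a h1 h2 1 j'' (by omega))
  have I1p : ∀ (n : ℕ) (j' : ℤ), term (bs 1) (bs 1) (n+2) n j' (n+1) = 0 := by
    intro n j'
    have hr := hrel 1 le_rfl (by omega) (n+2) n j'
    rw [Finset.Icc_self, Finset.sum_singleton] at hr
    have hc : compC k A L (bs 1) (bs 1) (n+2) n j'
        = term (bs 1) (bs 1) (n+2) n j' (n+1) := by
      refine compC_eq_single (n+1) (by omega) fun m hm hne => ?_
      by_cases hin : m + 1 = n+2 ∨ m + 0 = n+2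
      · exact term_eq_zero_left (V 1 (by omega) (by omega) m n _ (by omega) (by omega))
      · exact term_eq_zero_right (V 1 (by omega) (by omega) (n+2) m j' (by omega) (by omega))
    rw [← hc]
    exact hr
  have cExp : ∀ i, 2 ≤ i → i ≤ M+3 → ∀ j',
      compC k A L (bs i) (bs (M+5-i)) (M+3) 0 j'
        = term (bs i) (bs (M+5-i)) (M+3) 0 j' (i-1) := by
    intro i h2 h3 j'
    refine compC_eq_single (i-1) (by omega) fun m hm hne => ?_
    by_cases hin : m + 1 = M+3 ∨ m + (M+5-i-1) = M+3
    · exact term_eq_zero_left (V i (by omega) (by omega) m 0 _ (by omega) (by omega))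
    · push_neg at hin
      exact term_eq_zero_right (V (M+5-i) (by omega) (by omega) (M+3) m j' hin.1 (by omega))
  have RA : ∀ i, 2 ≤ i → i ≤ M+3 → ∀ j',
      (∑ a ∈ Finset.Icc 1 i,
        term (bs a) (bs (i+1-a)) (i-1) 0 j' (a-1)) = 0 := by
    intro i h2 h3 j'
    have hr := hrel i (by omega) (by omega) (i-1) 0 j'
    rw [← hr]
    refine Finset.sum_congr rfl fun a ha => ?_
    rw [Finset.mem_Icc] at ha
    refine (compC_eq_single (a-1) (by omega) fun m hm hne => ?_).symm
    by_cases hin : m + 1 = i-1 ∨ m + (i+1-a-1) = i-1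
    · by_cases hm1 : m = 1
      · subst hm1
        exact term_eq_zero_left (B1 a (by omega) (by omega) (by omega) _)
      · exact term_eq_zero_left (V a (by omega) (by omega) m 0 _ (by omega) (by omega))
    · push_neg at hin
      exact term_eq_zero_right (V (i+1-a) (by omega) (by omega) (i-1) m j' hin.1 (by omega))
  have RB : ∀ i, 2 ≤ i → i ≤ M+3 → ∀ j',
      (∑ a ∈ Finset.Icc 1 (M+5-i),
        term (bs a) (bs (M+6-i-a)) (M+3) (i-1) j' (i+a-2)) = 0 := by
    intro i h2 h3 j'
    have hr := hrel (M+5-i) (by omega) (by omega) (M+3) (i-1) j'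
    rw [← hr]
    refine Finset.sum_congr rfl fun a ha => ?_
    rw [Finset.mem_Icc] at ha
    rw [show M+5-i+1-a = M+6-i-a by omega]
    refine (compC_eq_single (i+a-2) (by omega) fun m hm hne => ?_).symm
    by_cases hin : m + 1 = M+3 ∨ m + (M+6-i-a-1) = M+3
    · by_cases hiN : i = M+2
      · subst hiN
        have ha2 : a ≠ 2 := by omega
        have hm2 : m = M+2 := by omega
        subst hm2
        have e1 : term (bs a) (bs (M+6-(M+2)-a)) (M+3) (M+2-1) j' (M+2)
            = term (bs 1) (bs (M+6-(M+2)-a)) (M+3) (M+2-1) j' (M+2) :=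
          term_rw_left (Ebar a (by omega) (by omega) ha2 (M+1) _)
        have e2 : term (bs 1) (bs (M+6-(M+2)-a)) (M+3) (M+2-1) j' (M+2)
            = term (bs 1) (bs 1) (M+3) (M+2-1) j' (M+2) :=
          term_rw_right (Ebar (M+6-(M+2)-a) (by omega) (by omega) (by omega) (M+2) j')
        exact e1.trans (e2.trans (I1p (M+1) j'))
      · exact term_eq_zero_left (V a (by omega) (by omega) m (i-1) _ (by omega) (by omega))
    · push_neg at hin
      exact term_eq_zero_right (V (M+6-i-a) (by omega) (by omega) (M+3) m j' hin.1 (by omega))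
  have RA3 : ∀ i, 2 ≤ i → i ≤ M+3 →
      (∑ a ∈ Finset.Icc 1 i,
        term3 (bs a) (bs (i+1-a)) (bs (M+5-i)) (M+3) j (i-1) (a-1)) = 0 := by
    intro i h2 h3
    calc (∑ a ∈ Finset.Icc 1 i, term3 (bs a) (bs (i+1-a)) (bs (M+5-i)) (M+3) j (i-1) (a-1))
        = ∑ a ∈ Finset.Icc 1 i,
            (cstT k A L (by push_cast; ring) ∘ₗ
              (term (bs a) (bs (i+1-a)) (i-1) 0 (j + 1 + ((i-1:ℕ):ℤ) - ((M+3:ℕ):ℤ)) (a-1) ∘ₗ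
                (bs (M+5-i)).cp (M+3) (i-1) j)) :=
          Finset.sum_congr rfl fun a ha =>
            (term_comp_cp (bs a) (bs (i+1-a)) (bs (M+5-i)) (M+3) (i-1) (a-1) j (by push_cast; ring)).symm
      _ = cstT k A L (by push_cast; ring) ∘ₗ
            ((∑ a ∈ Finset.Icc 1 i,
                term (bs a) (bs (i+1-a)) (i-1) 0 (j + 1 + ((i-1:ℕ):ℤ) - ((M+3:ℕ):ℤ)) (a-1)) ∘ₗ
              (bs (M+5-i)).cp (M+3) (i-1) j) := by
          rw [sum_compL, compL_sum]
      _ = 0 := by rw [RA i h2 h3 _]; simp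
  have RB3 : ∀ i, 2 ≤ i → i ≤ M+3 →
      (∑ a ∈ Finset.Icc 1 (M+5-i),
        term3 (bs i) (bs a) (bs (M+6-i-a)) (M+3) j (i+a-2) (i-1)) = 0 := by
    intro i h2 h3
    calc (∑ a ∈ Finset.Icc 1 (M+5-i), term3 (bs i) (bs a) (bs (M+6-i-a)) (M+3) j (i+a-2) (i-1))
        = ∑ a ∈ Finset.Icc 1 (M+5-i),
            (cstT k A L (by push_cast; ring) ∘ₗ
              ((bs i).cp (i-1) 0 (j + 2 + ((i-1:ℕ):ℤ) - ((M+3:ℕ):ℤ)) ∘ₗ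
                term (bs a) (bs (M+6-i-a)) (M+3) (i-1) j (i+a-2))) :=
          Finset.sum_congr rfl fun a ha =>
            (cp_comp_term (bs i) (bs a) (bs (M+6-i-a)) (M+3) (i+a-2) (i-1) j (by push_cast; ring)).symm
      _ = cstT k A L (by push_cast; ring) ∘ₗ
            ((bs i).cp (i-1) 0 (j + 2 + ((i-1:ℕ):ℤ) - ((M+3:ℕ):ℤ)) ∘ₗ
              (∑ a ∈ Finset.Icc 1 (M+5-i),
                term (bs a) (bs (M+6-i-a)) (M+3) (i-1) j (i+a-2))) := by
          rw [compL_sum, compL_sum]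
      _ = 0 := by rw [RB i h2 h3 j]; simp
  have EL : ∀ i ∈ Finset.Icc 2 (M+3),
      term3 (bs 1) (bs i) (bs (M+5-i)) (M+3) j (i-1) 0
        + (∑ a ∈ Finset.Icc 2 i,
            term3 (bs a) (bs (i+1-a)) (bs (M+5-i)) (M+3) j (i-1) (a-1)) = 0 := by
    intro i hi
    rw [Finset.mem_Icc] at hi
    have h := RA3 i hi.1 hi.2
    rw [show Finset.Icc 1 i = insert 1 (Finset.Icc 2 i) by
          ext x; simp only [Finset.mem_Icc, Finset.mem_insert]; omega,
        Finset.sum_insert (by simp [Finset.mem_Icc])] at h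
    exact h
  have ER : ∀ i ∈ Finset.Icc 2 (M+3),
      term3 (bs i) (bs (M+5-i)) (bs 1) (M+3) j (M+3) (i-1)
        + (∑ a ∈ Finset.Icc 1 (M+4-i),
            term3 (bs i) (bs a) (bs (M+6-i-a)) (M+3) j (i+a-2) (i-1)) = 0 := by
    intro i hi
    rw [Finset.mem_Icc] at hi
    have h := RB3 i hi.1 hi.2
    rw [show Finset.Icc 1 (M+5-i) = insert (M+5-i) (Finset.Icc 1 (M+4-i)) by
          ext x; simp only [Finset.mem_Icc, Finset.mem_insert]; omega,
        Finset.sum_insert (by simp only [Finset.mem_Icc]; omega)] at h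
    rw [show M+6-i-(M+5-i) = 1 by omega, show i+(M+5-i)-2 = M+3 by omega] at h
    exact h
  have S1 : (∑ i ∈ Finset.Icc 2 (M+3), term3 (bs 1) (bs i) (bs (M+5-i)) (M+3) j (i-1) 0)
      + (∑ i ∈ Finset.Icc 2 (M+3), ∑ a ∈ Finset.Icc 2 i,
          term3 (bs a) (bs (i+1-a)) (bs (M+5-i)) (M+3) j (i-1) (a-1)) = 0 := by
    rw [← Finset.sum_add_distrib]
    exact Finset.sum_eq_zero EL
  have S2 : (∑ i ∈ Finset.Icc 2 (M+3), term3 (bs i) (bs (M+5-i)) (bs 1) (M+3) j (M+3) (i-1))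
      + (∑ i ∈ Finset.Icc 2 (M+3), ∑ a ∈ Finset.Icc 1 (M+4-i),
          term3 (bs i) (bs a) (bs (M+6-i-a)) (M+3) j (i+a-2) (i-1)) = 0 := by
    rw [← Finset.sum_add_distrib]
    exact Finset.sum_eq_zero ER
  have KEY : (∑ i ∈ Finset.Icc 2 (M+3), ∑ a ∈ Finset.Icc 2 i,
        term3 (bs a) (bs (i+1-a)) (bs (M+5-i)) (M+3) j (i-1) (a-1))
      = (∑ i ∈ Finset.Icc 2 (M+3), ∑ a ∈ Finset.Icc 1 (M+4-i),
          term3 (bs i) (bs a) (bs (M+6-i-a)) (M+3) j (i+a-2) (i-1)) := by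
    rw [Finset.sum_sigma' (Finset.Icc 2 (M+3)) (fun i => Finset.Icc 2 i)
          (fun i a => term3 (bs a) (bs (i+1-a)) (bs (M+5-i)) (M+3) j (i-1) (a-1)),
        Finset.sum_sigma' (Finset.Icc 2 (M+3)) (fun i => Finset.Icc 1 (M+4-i))
          (fun i a => term3 (bs i) (bs a) (bs (M+6-i-a)) (M+3) j (i+a-2) (i-1))]
    refine Finset.sum_nbij' (fun p => (⟨p.2, p.1+1-p.2⟩ : (_ : ℕ) × ℕ))
      (fun p => (⟨p.1+p.2-1, p.1⟩ : (_ : ℕ) × ℕ)) ?_ ?_ ?_ ?_ ?_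
    · rintro ⟨i, a⟩ hp
      simp only [Finset.mem_sigma, Finset.mem_Icc] at hp ⊢
      omega
    · rintro ⟨i, a⟩ hp
      simp only [Finset.mem_sigma, Finset.mem_Icc] at hp ⊢
      omega
    · rintro ⟨i, a⟩ hp
      simp only [Finset.mem_sigma, Finset.mem_Icc] at hp
      dsimp only
      rw [show a+(i+1-a)-1 = i by omega]
    · rintro ⟨i, a⟩ hp
      simp only [Finset.mem_sigma, Finset.mem_Icc] at hp
      dsimp only
      rw [show i+a-1+1-i = a by omega]
    · rintro ⟨i, a⟩ hp
      simp only [Finset.mem_sigma, Finset.mem_Icc] at hp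
      rw [show M+6-a-(i+1-a) = M+5-i by omega, show a+(i+1-a)-2 = i-1 by omega]
  rw [KEY] at S1
  have hmain : (∑ i ∈ Finset.Icc 2 (M+3), term3 (bs 1) (bs i) (bs (M+5-i)) (M+3) j (i-1) 0)
      = (∑ i ∈ Finset.Icc 2 (M+3), term3 (bs i) (bs (M+5-i)) (bs 1) (M+3) j (M+3) (i-1)) :=
    (eq_neg_of_add_eq_zero_left S1).trans (eq_neg_of_add_eq_zero_left S2).symm
  have hS : ∀ j', (∑ i ∈ Finset.Icc 2 (M+3), compC k A L (bs i) (bs (M+5-i)) (M+3) 0 j')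
      = ∑ i ∈ Finset.Icc 2 (M+3), term (bs i) (bs (M+5-i)) (M+3) 0 j' (i-1) := by
    intro j'
    refine Finset.sum_congr rfl fun i hi => ?_
    rw [Finset.mem_Icc] at hi
    exact cExp i hi.1 hi.2 j'
  trans (∑ i ∈ Finset.Icc 2 (M+3), term3 (bs 1) (bs i) (bs (M+5-i)) (M+3) j (i-1) 0)
  · rw [hS j, compL_sum, compL_sum]
    exact Finset.sum_congr rfl fun i hi =>
      cp_comp_term (bs 1) (bs i) (bs (M+5-i)) (M+3) (i-1) 0 j (by push_cast; ring)
  trans (∑ i ∈ Finset.Icc 2 (M+3), term3 (bs i) (bs (M+5-i)) (bs 1) (M+3) j (M+3) (i-1))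
  · exact hmain
  · rw [hS, sum_compL, compL_sum]
    exact (Finset.sum_congr rfl fun i hi =>
      term_comp_cp (bs i) (bs (M+5-i)) (bs 1) (M+3) (M+3) (i-1) j (by push_cast; ring)).symm

end Part3

/-- the inductive step in the extension of an `A`-infinity action.
Given degree `1` coderivations `b_1, …, b_{N-1}` of `X = T(A[1]) ⊗ L` (each `b_i`
extending a component `A[1]^{⊗(i-1)} ⊗ L → L`, i.e. `ε ∘ b_i` is concentrated in
tensor length `i - 1`), with `∑_{i+j=n+1} b_i b_j = 0` for all `n ≤ N - 1`
(`N ≥ 4`), the map `c = b_2 b_{N-1} + b_3 b_{N-2} + ⋯ + b_{N-1} b_2`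
vanishes on the subcomodule `X_{N-1}` (tensor lengths `≤ N - 2`), maps `X_N` into `L`
(its component with source length `N - 1` lands in tensor length `0`), and the induced
degree `2` map `X_N / X_{N-1} = A[1]^{⊗(N-1)} ⊗ L → L` is a morphism of complexes,
i.e. commutes with the differentials induced by `b_1`. -/
theorem inductive_step_defect_chain_map
    (k A : Type) [CommRing k] [Ring A] [Algebra k A]
    (L : ℤ → Type) [∀ j, AddCommGroup (L j)] [∀ j, Module k (L j)]
    (N : ℕ) (hN : 4 ≤ N)
    (bs : ℕ → Coder k A L 1)
    (hconc : ∀ i : ℕ, 1 ≤ i → i ≤ N - 1 → ∀ (n : ℕ) (j : ℤ), n ≠ i - 1 →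
      epsC k A L (bs i) n j = 0)
    (hrel : ∀ n' : ℕ, 1 ≤ n' → n' ≤ N - 1 → ∀ (src tgt : ℕ) (j : ℤ),
      (∑ i ∈ Finset.Icc 1 n',
        compC k A L (bs i) (bs (n' + 1 - i)) src tgt j) = 0) :
    (∀ (src tgt : ℕ) (j : ℤ), src ≤ N - 2 →
      (∑ i ∈ Finset.Icc 2 (N - 1),
        compC k A L (bs i) (bs (N + 1 - i)) src tgt j) = 0)
    ∧ (∀ tgt : ℕ, 1 ≤ tgt → ∀ j : ℤ,
      (∑ i ∈ Finset.Icc 2 (N - 1),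
        compC k A L (bs i) (bs (N + 1 - i)) (N - 1) tgt j) = 0)
    ∧ (∀ j : ℤ,
      (cstT k A L (by push_cast; ring) ∘ₗ
          ((bs 1).cp 0 0 _ ∘ₗ
            (∑ i ∈ Finset.Icc 2 (N - 1),
              compC k A L (bs i) (bs (N + 1 - i)) (N - 1) 0 j))
        : XC k A L (N - 1) j →ₗ[k] XC k A L 0 (j + 3 - ((N - 1 : ℕ) : ℤ)))
      = cstT k A L (by push_cast; ring) ∘ₗ
          ((∑ i ∈ Finset.Icc 2 (N - 1),
              compC k A L (bs i) (bs (N + 1 - i)) (N - 1) 0 _) ∘ₗ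
            (bs 1).cp (N - 1) (N - 1) j)) := by
  refine ⟨?_, ?_, ?_⟩
  · intro src tgt j hsrc
    exact mainVanish N hN bs hconc hrel src tgt j (by omega)
  · intro tgt h1 j
    exact mainVanish N hN bs hconc hrel (N-1) tgt j (by omega)
  · intro j
    obtain ⟨M, rfl⟩ : ∃ M, N = M + 4 := ⟨N - 4, by omega⟩
    exact part3 M bs hconc hrel j
end
end

section
/- Let D be a double complex concentrated in the right half plane (columns indexed by p ≥ 0) such that every column is acyclic. Then the product total complex Tot^Π D is acyclic. -/
noncomputable section

/-- Transport along equalities of both indices of a doubly graded module. -/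
def cst2 {k : Type} [CommRing k] {M : ℕ → ℤ → Type} [∀ p q, AddCommGroup (M p q)]
    [∀ p q, Module k (M p q)] {p p' : ℕ} {q q' : ℤ} (h : p = p') (h' : q = q') :
    M p q →ₗ[k] M p' q' := by
  subst h; subst h'; exact LinearMap.id

/-- The degree `n` component of the product total complex of a double complex
concentrated in the right half plane (columns `p ≥ 0`, rows `q ∈ ℤ`). -/
abbrev TotPi (k : Type) [CommRing k] (M : ℕ → ℤ → Type) [∀ p q, AddCommGroup (M p q)]
    [∀ p q, Module k (M p q)] (n : ℤ) : Type := ∀ p : ℕ, M p (n - (p : ℤ))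

section Aux

variable {k : Type} [CommRing k] {M : ℕ → ℤ → Type} [∀ p q, AddCommGroup (M p q)]
    [∀ p q, Module k (M p q)]

theorem cst2_cst2 {p p' p'' : ℕ} {q q' q'' : ℤ} (h₁ : p = p') (h₁' : q = q')
    (h₂ : p' = p'') (h₂' : q' = q'') (x : M p q) :
    cst2 (k := k) h₂ h₂' (cst2 (k := k) h₁ h₁' x)
      = cst2 (k := k) (h₁.trans h₂) (h₁'.trans h₂') x := by
  subst h₁; subst h₁'; subst h₂; subst h₂'; rfl

theorem cst2_eq_zero_iff {p p' : ℕ} {q q' : ℤ} (h : p = p') (h' : q = q') (a : M p q) :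
    cst2 (k := k) h h' a = 0 ↔ a = 0 := by subst h; subst h'; exact Iff.rfl

theorem cst2_eq_iff {p p' : ℕ} {q q' : ℤ} (h : p = p') (h' : q = q') (a : M p q) (b : M p' q') :
    cst2 (k := k) h h' a = b ↔ a = cst2 (k := k) h.symm h'.symm b := by
  subst h; subst h'; exact Iff.rfl

theorem cstM_eq_iff {n m : ℤ} (h : n = m) (a : TotPi k M n) (b : TotPi k M m) :
    cstM (k := k) (M := TotPi k M) h a = b ↔
      ∀ p : ℕ, cst2 (k := k) rfl (show n - (p : ℤ) = m - (p : ℤ) by rw [h]) (a p) = b p := by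
  subst h; exact funext_iff

variable (dv : ∀ (p : ℕ) (q : ℤ), M p q →ₗ[k] M p (q + 1))
variable (dh : ∀ (p : ℕ) (q : ℤ), M p q →ₗ[k] M (p + 1) q)

theorem dv_cst2 {p : ℕ} {q q' : ℤ} (h' : q = q') (x : M p q) :
    dv p q' (cst2 (k := k) rfl h' x) = cst2 (k := k) rfl (by rw [h']) (dv p q x) := by
  subst h'; rfl

theorem dh_cst2 {p : ℕ} {q q' : ℤ} (h' : q = q') (x : M p q) :
    dh p q' (cst2 (k := k) rfl h' x) = cst2 (k := k) rfl h' (dh p q x) := by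
  subst h'; rfl

/-- The invariant carried along the staircase induction: at column `p` we have the
residual cycle `xr`, a lift `yp` of it, such that `dh xr = dh (x p)`. -/
abbrev Cty (n : ℤ) (x : TotPi k M n) (p : ℕ) : Type :=
  Σ' (xr : M p (n - (p : ℤ))) (_yp : M p (n - 1 - (p : ℤ))),
    dh p (n - (p : ℤ)) xr = dh p (n - (p : ℤ)) (x p) ∧
    cst2 (k := k) rfl (show n - 1 - (p : ℤ) + 1 = n - (p : ℤ) by ring)
      (dv p (n - 1 - (p : ℤ)) _yp) = xr

def buildZero (n : ℤ) (x : TotPi k M n)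
    (F : ∀ (p : ℕ) (q : ℤ) (z : M p q), dv p q z = 0 → M p (q - 1))
    (hF : ∀ p q z h, cst2 (k := k) rfl (show q - 1 + 1 = q by ring)
      (dv p (q - 1) (F p q z h)) = z)
    (hx0 : dv 0 (n - ((0 : ℕ) : ℤ)) (x 0) = 0) : Cty dv dh n x 0 :=
  ⟨x 0,
   cst2 (k := k) rfl (show n - ((0 : ℕ) : ℤ) - 1 = n - 1 - ((0 : ℕ) : ℤ) by ring)
     (F 0 (n - ((0 : ℕ) : ℤ)) (x 0) hx0),
   rfl,
   by rw [dv_cst2, cst2_cst2]; exact hF 0 _ (x 0) hx0⟩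

def buildStep (n : ℤ) (x : TotPi k M n)
    (hdh2 : ∀ p q (z : M p q), dh (p + 1) q (dh p q z) = 0)
    (hanti : ∀ p q (z : M p q), dh p (q + 1) (dv p q z) = - dv (p + 1) q (dh p q z))
    (F : ∀ (p : ℕ) (q : ℤ) (z : M p q), dv p q z = 0 → M p (q - 1))
    (hF : ∀ p q z h, cst2 (k := k) rfl (show q - 1 + 1 = q by ring)
      (dv p (q - 1) (F p q z h)) = z)
    (hxs : ∀ p : ℕ, dv (p + 1) (n - ((p + 1 : ℕ) : ℤ)) (x (p + 1))
      = - cst2 (k := k) rfl (show n - (p : ℤ) = n - ((p + 1 : ℕ) : ℤ) + 1 by push_cast; ring)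
          (dh p (n - (p : ℤ)) (x p)))
    (p : ℕ) (c : Cty dv dh n x p) : Cty dv dh n x (p + 1) :=
  have h1 : dh p (n - 1 - (p : ℤ) + 1) (dv p (n - 1 - (p : ℤ)) c.2.1)
      = cst2 (k := k) rfl (show n - (p : ℤ) = n - 1 - (p : ℤ) + 1 by ring)
          (dh p (n - (p : ℤ)) (x p)) := by
    have h0 := congrArg (dh p (n - (p : ℤ))) c.2.2.2
    rw [dh_cst2] at h0
    exact (cst2_eq_iff _ _ _ _).mp (h0.trans c.2.2.1)
  have hclosed : dv (p + 1) (n - ((p + 1 : ℕ) : ℤ))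
      (x (p + 1) - cst2 (k := k) rfl
        (show n - 1 - (p : ℤ) = n - ((p + 1 : ℕ) : ℤ) by push_cast; ring)
        (dh p (n - 1 - (p : ℤ)) c.2.1)) = 0 := by
    have h3 : dv (p + 1) (n - 1 - (p : ℤ)) (dh p (n - 1 - (p : ℤ)) c.2.1)
        = - dh p (n - 1 - (p : ℤ) + 1) (dv p (n - 1 - (p : ℤ)) c.2.1) := by
      rw [hanti, neg_neg]
    rw [map_sub, hxs p, dv_cst2, h3, h1, map_neg, cst2_cst2]
    rw [sub_neg_eq_add]
    have hirr : cst2 (k := k)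
        ((rfl : p + 1 = p + 1).trans rfl)
        ((show n - (p : ℤ) = n - 1 - (p : ℤ) + 1 by ring).trans
          (show n - 1 - (p : ℤ) + 1 = n - ((p + 1 : ℕ) : ℤ) + 1 by push_cast; ring))
        (dh p (n - (p : ℤ)) (x p))
      = cst2 (k := k) rfl (show n - (p : ℤ) = n - ((p + 1 : ℕ) : ℤ) + 1 by push_cast; ring)
        (dh p (n - (p : ℤ)) (x p)) := rfl
    rw [hirr, neg_add_cancel]
  ⟨x (p + 1) - cst2 (k := k) rfl
      (show n - 1 - (p : ℤ) = n - ((p + 1 : ℕ) : ℤ) by push_cast; ring)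
      (dh p (n - 1 - (p : ℤ)) c.2.1),
   cst2 (k := k) rfl
     (show n - ((p + 1 : ℕ) : ℤ) - 1 = n - 1 - ((p + 1 : ℕ) : ℤ) by ring)
     (F (p + 1) (n - ((p + 1 : ℕ) : ℤ)) _ hclosed),
   by rw [map_sub, dh_cst2, hdh2, map_zero, sub_zero],
   by rw [dv_cst2, cst2_cst2]; exact hF (p + 1) _ _ hclosed⟩

def build (n : ℤ) (x : TotPi k M n)
    (hdh2 : ∀ p q (z : M p q), dh (p + 1) q (dh p q z) = 0)
    (hanti : ∀ p q (z : M p q), dh p (q + 1) (dv p q z) = - dv (p + 1) q (dh p q z))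
    (F : ∀ (p : ℕ) (q : ℤ) (z : M p q), dv p q z = 0 → M p (q - 1))
    (hF : ∀ p q z h, cst2 (k := k) rfl (show q - 1 + 1 = q by ring)
      (dv p (q - 1) (F p q z h)) = z)
    (hx0 : dv 0 (n - ((0 : ℕ) : ℤ)) (x 0) = 0)
    (hxs : ∀ p : ℕ, dv (p + 1) (n - ((p + 1 : ℕ) : ℤ)) (x (p + 1))
      = - cst2 (k := k) rfl (show n - (p : ℤ) = n - ((p + 1 : ℕ) : ℤ) + 1 by push_cast; ring)
          (dh p (n - (p : ℤ)) (x p))) :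
    ∀ p : ℕ, Cty dv dh n x p
  | 0 => buildZero dv dh n x F hF hx0
  | p + 1 => buildStep dv dh n x hdh2 hanti F hF hxs p
      (build n x hdh2 hanti F hF hx0 hxs p)

end Aux
/-- let `D = (M, dv, dh)` be a double complex (of `k`-modules) in the
right half plane (columns indexed by `p ≥ 0`), with anticommuting differentials,
such that every column is acyclic.  Then the product total complex `Tot^Π D`, with
differential `(D x)_p = dv(x_p) + dh(x_{p-1})`, is acyclic. -/
theorem product_total_complex_acyclic
    (k : Type) [CommRing k]
    (M : ℕ → ℤ → Type) [∀ p q, AddCommGroup (M p q)] [∀ p q, Module k (M p q)]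
    (dv : ∀ (p : ℕ) (q : ℤ), M p q →ₗ[k] M p (q + 1))
    (dh : ∀ (p : ℕ) (q : ℤ), M p q →ₗ[k] M (p + 1) q)
    (hdv2 : ∀ p q (x : M p q), dv p (q + 1) (dv p q x) = 0)
    (hdh2 : ∀ p q (x : M p q), dh (p + 1) q (dh p q x) = 0)
    (hanti : ∀ p q (x : M p q), dh p (q + 1) (dv p q x) = - dv (p + 1) q (dh p q x))
    -- every column is acyclic:
    (hcol : ∀ (p : ℕ) (q : ℤ) (x : M p q), dv p q x = 0 →
      ∃ y : M p (q - 1), cst2 (k := k) rfl (by ring) (dv p (q - 1) y) = x)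
    -- the differential of the product total complex:
    (D : ∀ n : ℤ, TotPi k M n →ₗ[k] TotPi k M (n + 1))
    (hD : ∀ (n : ℤ) (x : TotPi k M n) (p : ℕ),
      D n x p = cst2 (k := k) rfl (by ring) (dv p (n - (p : ℤ)) (x p))
        + (if h : 1 ≤ p then
            cst2 (k := k) (by omega) (by push_cast; omega)
              (dh (p - 1) (n - ((p - 1 : ℕ) : ℤ)) (x (p - 1)))
          else 0)) :
    ∀ (n : ℤ) (x : TotPi k M n), D n x = 0 →
      ∃ y : TotPi k M (n - 1), cstM (k := k) (by ring) (D (n - 1) y) = x := by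
  intro n x hx
  choose F hF using hcol
  have hx0 : dv 0 (n - ((0 : ℕ) : ℤ)) (x 0) = 0 := by
    have h := hD n x 0
    rw [hx, dif_neg (by omega : ¬ (1 ≤ 0)), add_zero] at h
    exact (cst2_eq_zero_iff _ _ _).mp h.symm
  have hxs : ∀ p : ℕ, dv (p + 1) (n - ((p + 1 : ℕ) : ℤ)) (x (p + 1))
      = - cst2 (k := k) rfl (show n - (p : ℤ) = n - ((p + 1 : ℕ) : ℤ) + 1 by push_cast; ring)
          (dh p (n - (p : ℤ)) (x p)) := by
    intro p
    have h := hD n x (p + 1)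
    rw [hx, dif_pos (by omega : 1 ≤ p + 1)] at h
    have h2 : cst2 (k := k) rfl
        (show n - ((p + 1 : ℕ) : ℤ) + 1 = n + 1 - ((p + 1 : ℕ) : ℤ) by ring)
        (dv (p + 1) (n - ((p + 1 : ℕ) : ℤ)) (x (p + 1)))
        = - cst2 (k := k) rfl
            (show n - (p : ℤ) = n + 1 - ((p + 1 : ℕ) : ℤ) by push_cast; ring)
            (dh p (n - (p : ℤ)) (x p)) := eq_neg_of_add_eq_zero_left h.symm
    have h3 := (cst2_eq_iff _ _ _ _).mp h2
    rw [map_neg, cst2_cst2] at h3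
    exact h3
  refine ⟨fun p => (build dv dh n x hdh2 hanti F hF hx0 hxs p).2.1,
    (cstM_eq_iff _ _ _).mpr ?_⟩
  intro p
  cases p with
  | zero =>
    rw [hD, dif_neg (by omega : ¬ (1 ≤ 0))]
    have hb : cst2 (k := k) rfl
        (show n - 1 - ((0 : ℕ) : ℤ) + 1 = n - ((0 : ℕ) : ℤ) by ring)
        (dv 0 (n - 1 - ((0 : ℕ) : ℤ))
          ((build dv dh n x hdh2 hanti F hF hx0 hxs 0).2.1)) = x 0 :=
      (build dv dh n x hdh2 hanti F hF hx0 hxs 0).2.2.2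
    have key : cst2 (k := k) rfl
        (show n - 1 + 1 - ((0 : ℕ) : ℤ) = n - ((0 : ℕ) : ℤ) by ring)
        (cst2 (k := k) rfl
          (show n - 1 - ((0 : ℕ) : ℤ) + 1 = n - 1 + 1 - ((0 : ℕ) : ℤ) by ring)
          (dv 0 (n - 1 - ((0 : ℕ) : ℤ))
            ((build dv dh n x hdh2 hanti F hF hx0 hxs 0).2.1)) + 0) = x 0 := by
      rw [add_zero (cst2 (k := k) rfl
          (show n - 1 - ((0 : ℕ) : ℤ) + 1 = n - 1 + 1 - ((0 : ℕ) : ℤ) by ring)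
          (dv 0 (n - 1 - ((0 : ℕ) : ℤ))
            ((build dv dh n x hdh2 hanti F hF hx0 hxs 0).2.1))), cst2_cst2]
      exact hb
    exact key
  | succ m =>
    rw [hD, dif_pos (by omega : 1 ≤ m + 1)]
    have hb : cst2 (k := k) rfl
        (show n - 1 - ((m + 1 : ℕ) : ℤ) + 1 = n - ((m + 1 : ℕ) : ℤ) by ring)
        (dv (m + 1) (n - 1 - ((m + 1 : ℕ) : ℤ))
          ((build dv dh n x hdh2 hanti F hF hx0 hxs (m + 1)).2.1))
        = x (m + 1) - cst2 (k := k) rfl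
            (show n - 1 - (m : ℤ) = n - ((m + 1 : ℕ) : ℤ) by push_cast; ring)
            (dh m (n - 1 - (m : ℤ))
              ((build dv dh n x hdh2 hanti F hF hx0 hxs m).2.1)) :=
      (build dv dh n x hdh2 hanti F hF hx0 hxs (m + 1)).2.2.2
    have key : cst2 (k := k) rfl
        (show n - 1 + 1 - ((m + 1 : ℕ) : ℤ) = n - ((m + 1 : ℕ) : ℤ) by push_cast; ring)
        (cst2 (k := k) rfl
          (show n - 1 - ((m + 1 : ℕ) : ℤ) + 1 = n - 1 + 1 - ((m + 1 : ℕ) : ℤ) by ring)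
          (dv (m + 1) (n - 1 - ((m + 1 : ℕ) : ℤ))
            ((build dv dh n x hdh2 hanti F hF hx0 hxs (m + 1)).2.1))
        + cst2 (k := k) rfl
            (show n - 1 - (m : ℤ) = n - 1 + 1 - ((m + 1 : ℕ) : ℤ) by push_cast; ring)
            (dh m (n - 1 - (m : ℤ))
              ((build dv dh n x hdh2 hanti F hF hx0 hxs m).2.1)))
        = x (m + 1) := by
      rw [map_add, cst2_cst2, cst2_cst2, hb]
      abel
    exact key
end
end
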